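/- For fixed q ∈ (0,1/2) and integers R,L ≥ 1, the function p ↦ α(p,q,R,L) (with α as defined by α = [p(1-q)q^R(1-(1-p)^L) + qp(1-p)^L(1-q^R)] / [(1-q)q^R(1-(1-p)^L) + p(1-p)^L(1-q^R)]) has a unique critical point p₀ ∈ (1/2,1) with α(p₀) = 1/2, and moreover α(p) < 1/2 for p < p₀ and α(p) > 1/2 for p > p₀. -/

import Mathlib

noncomputable def alpha (p q : ℝ) (R L : ℕ) : ℝ :=
  (p * ((1-q) * q^R * (1 - (1-p)^L)) + q * (p * (1-p)^L * (1 - q^R))) /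
    ((1-q) * q^R * (1 - (1-p)^L) + p * (1-p)^L * (1 - q^R))

theorem stmt1 (q : ℝ) (R L : ℕ) (hq : q ∈ Set.Ioo (0:ℝ) (1/2))
    (hR : 1 ≤ R) (hL : 1 ≤ L) :
    ∃ p₀ ∈ Set.Ioo (1/2 : ℝ) 1,
      alpha p₀ q R L = 1/2 ∧
      (∀ p ∈ Set.Ioo (0:ℝ) 1, p < p₀ → alpha p q R L < 1/2) ∧
      (∀ p ∈ Set.Ioo (0:ℝ) 1, p₀ < p → 1/2 < alpha p q R L) ∧
      (∀ p₀' ∈ Set.Ioo (1/2 : ℝ) 1, alpha p₀' q R L = 1/2 → p₀' = p₀) := by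
  obtain ⟨hq0, hqh⟩ := hq
  obtain ⟨m, rfl⟩ : ∃ m, L = m + 1 := ⟨L - 1, by omega⟩
  have hq1 : q < 1 := by linarith
  have hqR : q ^ R < 1 := pow_lt_one₀ hq0.le hq1 (by omega)
  have hc1 : (0:ℝ) < (1 - q) * q ^ R := mul_pos (by linarith) (pow_pos hq0 R)
  have hc2 : (0:ℝ) < (1 - 2*q) * (1 - q ^ R) := mul_pos (by linarith) (by linarith)
  set f : ℝ → ℝ := fun p =>
    (1-q)*q^R*((2*p-1)*(1-(1-p)^(m+1))) - (1-2*q)*(1-q^R)*(p*(1-p)^(m+1)) with hfdef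
  have hderiv : ∀ p : ℝ, HasDerivAt f
      ((1-q)*q^R*(2*(1-(1-p)^(m+1)) + (2*p-1)*(((m:ℝ)+1)*(1-p)^m))
        - (1-2*q)*(1-q^R)*((1-p)^(m+1) - p*(((m:ℝ)+1)*(1-p)^m))) p := by
    intro p
    have h1 : HasDerivAt (fun x:ℝ => (1-x)^(m+1)) (-(((m:ℝ)+1)*(1-p)^m)) p := by
      have := ((hasDerivAt_id p).const_sub 1).fun_pow (m+1)
      simpa [mul_comm, mul_assoc] using this
    have ha : HasDerivAt (fun x:ℝ => 2*x-1) 2 p := by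
      simpa using ((hasDerivAt_id p).const_mul 2).sub_const 1
    have hb : HasDerivAt (fun x:ℝ => 1-(1-x)^(m+1)) (((m:ℝ)+1)*(1-p)^m) p := by
      simpa using h1.const_sub 1
    have h2 := ha.fun_mul hb
    have h3 := (hasDerivAt_id p).fun_mul h1
    have h4 := (h2.const_mul ((1-q)*q^R)).sub (h3.const_mul ((1-2*q)*(1-q^R)))
    refine HasDerivAt.congr_deriv h4 ?_
    simp only [id_eq]
    ring
  have hcont : Continuous f := by
    rw [hfdef]; fun_prop
  have hmono : StrictMonoOn f (Set.Icc (1/2 : ℝ) 1) := by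
    apply strictMonoOn_of_deriv_pos (convex_Icc _ _) hcont.continuousOn
    intro x hx
    rw [interior_Icc] at hx
    rw [(hderiv x).deriv]
    have hx1 : (0:ℝ) < 1 - x := by linarith [hx.2]
    have hp1 : (1-x)^(m+1) < 1 := pow_lt_one₀ hx1.le (by linarith [hx.1]) (by omega)
    have hp2 : (0:ℝ) < (1-x)^m := pow_pos hx1 m
    have key : (1-x)^(m+1) - x*(((m:ℝ)+1)*(1-x)^m) < 0 := by
      have he : (1-x)^(m+1) = (1-x)^m*(1-x) := pow_succ _ _
      rw [he]
      have hneg : (0:ℝ) < x*((m:ℝ)+1) - (1-x) := by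
        have hm0 : (0:ℝ) ≤ (m:ℝ) := Nat.cast_nonneg m
        nlinarith [hx.1]
      nlinarith [mul_pos hp2 hneg]
    have t0 : (0:ℝ) ≤ (2*x-1)*(((m:ℝ)+1)*(1-x)^m) :=
      mul_nonneg (by linarith [hx.1]) (by positivity)
    have t1 : 0 < (1-q)*q^R*(2*(1-(1-x)^(m+1)) + (2*x-1)*(((m:ℝ)+1)*(1-x)^m)) :=
      mul_pos hc1 (by linarith)
    have t2 : 0 < (1-2*q)*(1-q^R)*(-((1-x)^(m+1) - x*(((m:ℝ)+1)*(1-x)^m))) :=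
      mul_pos hc2 (by linarith)
    nlinarith [t1, t2]
  have hf_half : f (1/2 : ℝ) < 0 := by
    have e : f (1/2:ℝ) = -((1-2*q)*(1-q^R)*(1/2*(1/2)^(m+1))) := by
      rw [hfdef]; norm_num
    rw [e]
    have : 0 < (1-2*q)*(1-q^R)*(1/2*(1/2:ℝ)^(m+1)) :=
      mul_pos hc2 (by positivity)
    linarith
  have hf_one : 0 < f 1 := by
    have e : f (1:ℝ) = (1-q)*q^R := by
      rw [hfdef]; norm_num
    rw [e]; exact hc1
  have hIVT := intermediate_value_Ioo (by norm_num : (1/2:ℝ) ≤ 1) hcont.continuousOn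
  obtain ⟨p₀, hp₀, hfp₀⟩ := hIVT (Set.mem_Ioo.mpr ⟨hf_half, hf_one⟩ : (0:ℝ) ∈ Set.Ioo (f (1/2)) (f 1))
  have hDpos : ∀ p ∈ Set.Ioo (0:ℝ) 1,
      0 < (1-q)*q^R*(1-(1-p)^(m+1)) + p*(1-p)^(m+1)*(1-q^R) := by
    intro p hp
    have h1 : (1-p)^(m+1) < 1 := pow_lt_one₀ (by linarith [hp.2]) (by linarith [hp.1]) (by omega)
    have h2 : (0:ℝ) < (1-p)^(m+1) := pow_pos (by linarith [hp.2]) _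
    have t1 := mul_pos hc1 (by linarith : (0:ℝ) < 1 - (1-p)^(m+1))
    have t2 := mul_pos (mul_pos hp.1 h2) (by linarith : (0:ℝ) < 1-q^R)
    linarith
  have hsub : ∀ p ∈ Set.Ioo (0:ℝ) 1, alpha p q R (m+1) - 1/2 =
      f p / (2*((1-q)*q^R*(1-(1-p)^(m+1)) + p*(1-p)^(m+1)*(1-q^R))) := by
    intro p hp
    have hD := hDpos p hp
    rw [alpha, hfdef]
    field_simp
    ring
  refine ⟨p₀, hp₀, ?_, ?_, ?_, ?_⟩
  · have hm' : p₀ ∈ Set.Ioo (0:ℝ) 1 := ⟨by linarith [hp₀.1], hp₀.2⟩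
    have h := hsub p₀ hm'
    rw [hfp₀] at h
    simp at h
    linarith
  · intro p hp hlt
    have hD := hDpos p hp
    have hfneg : f p < 0 := by
      rcases le_or_gt p (1/2) with hc | hc
      · have h1 : (1-p)^(m+1) < 1 := pow_lt_one₀ (by linarith [hp.2]) (by linarith [hp.1]) (by omega)
        have h2 : (0:ℝ) < (1-p)^(m+1) := pow_pos (by linarith [hp.2]) _
        have t1 : (2*p-1)*(1-(1-p)^(m+1)) ≤ 0 :=
          mul_nonpos_of_nonpos_of_nonneg (by linarith) (by linarith)
        have t1' : (1-q)*q^R*((2*p-1)*(1-(1-p)^(m+1))) ≤ 0 := by nlinarith [t1, hc1]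
        have t2 : 0 < (1-2*q)*(1-q^R)*(p*(1-p)^(m+1)) :=
          mul_pos hc2 (mul_pos hp.1 h2)
        rw [hfdef]; dsimp only; linarith
      · have h := hmono ⟨hc.le, by linarith [hp.2]⟩ ⟨hp₀.1.le, hp₀.2.le⟩ hlt
        rw [hfp₀] at h; exact h
    have h := hsub p hp
    have : alpha p q R (m+1) - 1/2 < 0 := by
      rw [h]; exact div_neg_of_neg_of_pos hfneg (by linarith)
    linarith
  · intro p hp hlt
    have hD := hDpos p hp
    have hfpos : 0 < f p := by
      have h := hmono ⟨hp₀.1.le, hp₀.2.le⟩ ⟨by linarith [hp₀.1], hp.2.le⟩ hlt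
      rw [hfp₀] at h; exact h
    have h := hsub p hp
    have : 0 < alpha p q R (m+1) - 1/2 := by
      rw [h]; exact div_pos hfpos (by linarith)
    linarith
  · intro p₀' hp₀' he
    have hm' : p₀' ∈ Set.Ioo (0:ℝ) 1 := ⟨by linarith [hp₀'.1], hp₀'.2⟩
    have hD := hDpos p₀' hm'
    have hz : f p₀' = 0 := by
      have h := hsub p₀' hm'
      rw [he] at h
      norm_num at h
      rcases div_eq_zero_iff.mp h.symm with h' | h'
      · exact h'
      · linarith
    exact hmono.injOn ⟨hp₀'.1.le, hp₀'.2.le⟩ ⟨hp₀.1.le, hp₀.2.le⟩ (hz.trans hfp₀.symm)
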